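/- Let u, v be pure unit quaternions with angle α between them (so that Re(uv) = -cos α), s > 0, and define ρ_n(s) = (Q_n(s) Q'_{n+1}(s) − Q_{n+1}(s) Q'_n(s))/h_n and δ_n(s) = Q_n(s) Q_{n+1}(s)/(s h_n). Then with K_n(us, vs) = (1/2)[ρ_n(s) − δ_n(s)] − (1/2)[ρ_n(s) + δ_n(s)] u v, the 2×2 Moore determinant det [[K_n(us,us), K_n(us,vs)],[K_n(vs,us), K_n(vs,vs)]] equals (ρ_n(s)² − δ_n(s)²)·(1 − cos α)/2. -/

import Mathlib

open Polynomial Quaternion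

noncomputable def β (n : ℕ) : ℝ := if Odd n then n + 2 else n

noncomputable def Q : ℕ → Polynomial ℝ
  | 0 => 1
  | 1 => X
  | (n + 2) => X * Q (n + 1) - C (β (n + 1)) * Q n

noncomputable def h (n : ℕ) : ℝ :=
  if Odd n then (n.factorial : ℝ) * (n + 2) else ((n + 1).factorial : ℝ)

/-- `ρ_n(s) = (Q_n(s) Q'_{n+1}(s) − Q_{n+1}(s) Q'_n(s))/h_n`. -/
noncomputable def ρ (n : ℕ) (s : ℝ) : ℝ :=
  ((Q n).eval s * (derivative (Q (n + 1))).eval s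
    - (Q (n + 1)).eval s * (derivative (Q n)).eval s) / h n

/-- `δ_n(s) = Q_n(s) Q_{n+1}(s)/(s h_n)`. -/
noncomputable def δ (n : ℕ) (s : ℝ) : ℝ :=
  (Q n).eval s * (Q (n + 1)).eval s / (s * h n)

/-- `K_n(us, vs) = (1/2)[ρ_n(s) − δ_n(s)] − (1/2)[ρ_n(s) + δ_n(s)] u v`. -/
noncomputable def Kf (n : ℕ) (s : ℝ) (u v : ℍ[ℝ]) : ℍ[ℝ] :=
  ((ρ n s - δ n s) / 2) • (1 : ℍ[ℝ]) - ((ρ n s + δ n s) / 2) • (u * v)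

theorem stmt17 (n : ℕ) (u v : ℍ[ℝ])
    (hu : u.re = 0) (hu1 : ‖u‖ = 1) (hv : v.re = 0) (hv1 : ‖v‖ = 1)
    (α : ℝ) (hα : (u * v).re = -Real.cos α) (s : ℝ) (hs : 0 < s) :
    (Kf n s u u).re * (Kf n s v v).re - ‖Kf n s u v‖ ^ 2
      = (ρ n s ^ 2 - δ n s ^ 2) * (1 - Real.cos α) / 2 := by
  set r := ρ n s
  set d := δ n s
  have hnu : normSq u = 1 := by
    rw [normSq_eq_norm_mul_self, hu1]; ring
  have hnv : normSq v = 1 := by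
    rw [normSq_eq_norm_mul_self, hv1]; ring
  have huu : (u * u).re = -1 := by
    have h1 := normSq_def' u
    rw [Quaternion.re_mul, hu]
    nlinarith
  have hvv : (v * v).re = -1 := by
    have h1 := normSq_def' v
    rw [Quaternion.re_mul, hv]
    nlinarith
  have hnw : normSq (u * v) = 1 := by
    rw [map_mul, hnu, hnv]; ring
  have hnorm : ‖Kf n s u v‖ ^ 2 = normSq (Kf n s u v) := by
    rw [normSq_eq_norm_mul_self, sq]
  have hw := normSq_def' (u * v)
  rw [hnw, hα] at hw
  rw [hnorm]
  simp only [Kf, normSq_def', Quaternion.re_sub, Quaternion.imI_sub, Quaternion.imJ_sub,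
    Quaternion.imK_sub, Quaternion.re_smul, Quaternion.imI_smul, Quaternion.imJ_smul,
    Quaternion.imK_smul, Quaternion.re_one, Quaternion.imI_one, Quaternion.imJ_one,
    Quaternion.imK_one, smul_eq_mul, huu, hvv, hα]
  linear_combination ((ρ n s + δ n s) ^ 2 / 4) * hw
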